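/- Let m and n be positive integers and let p be any prime. Then v_p(C(m+n, n)) ≤ max_{1 ≤ i ≤ n} v_p(m+i), where C(m+n, n) is the binomial coefficient. -/

import Mathlib

/-- **Lemma 1.** For any prime `p`, `v_p(C(m+n, n)) ≤ max_{1 ≤ i ≤ n} v_p(m+i)`. -/
theorem factorization_choose_le_sup
    (m n : ℕ) (hm : 0 < m) (hn : 0 < n) (p : ℕ) (hp : p.Prime) :
    (Nat.choose (m + n) n).factorization p ≤
      (Finset.Icc 1 n).sup (fun i => (m + i).factorization p) := by
  haveI : Fact p.Prime := ⟨hp⟩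
  set b := Nat.log p (m + n) + 1 with hb
  set S : Finset ℕ := {i ∈ Finset.Ico 1 b | p ^ i ≤ n % p ^ i + m % p ^ i} with hS
  have hchoose_pos : 0 < Nat.choose (m + n) n := Nat.choose_pos (Nat.le_add_left n m)
  have hkey : (Nat.choose (m + n) n).factorization p = S.card := by
    have h1 := Nat.Prime.emultiplicity_choose' hp (p := p) (n := m) (k := n) (b := b)
      (by omega)
    rw [Nat.factorization_def _ hp]
    have h2 := padicValNat_eq_emultiplicity (p := p) hchoose_pos.ne'
    exact_mod_cast h2.trans h1
  rw [hkey]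
  rcases S.eq_empty_or_nonempty with hE | hNE
  · simp [hE]
  · set K := S.max' hNE with hK
    have hKmem : K ∈ S := S.max'_mem hNE
    have hKcarry : p ^ K ≤ n % p ^ K + m % p ^ K := (Finset.mem_filter.mp hKmem).2
    have hK1 : 1 ≤ K := (Finset.mem_Ico.mp (Finset.mem_filter.mp hKmem).1).1
    have hcard : S.card ≤ K := by
      have hsub : S ⊆ Finset.Icc 1 K := fun x hx =>
        Finset.mem_Icc.mpr ⟨(Finset.mem_Ico.mp (Finset.mem_filter.mp hx).1).1,
          S.le_max' x hx⟩
      calc S.card ≤ (Finset.Icc 1 K).card := Finset.card_le_card hsub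
        _ = K := by rw [Nat.card_Icc]; omega
    -- pick j = p^K - m % p^K
    have hppos : 0 < p ^ K := Nat.pow_pos hp.pos
    have hmlt : m % p ^ K < p ^ K := Nat.mod_lt _ hppos
    set j := p ^ K - m % p ^ K with hj
    have hj1 : 1 ≤ j := by omega
    have hjn : j ≤ n := le_trans (by omega) (Nat.mod_le n (p ^ K))
    have hdvd : p ^ K ∣ m + j := by
      have hdm := Nat.div_add_mod m (p ^ K)
      have heq : m + j = p ^ K * (m / p ^ K) + p ^ K := by omega
      rw [heq]
      exact Dvd.dvd.add (Dvd.intro _ rfl) dvd_rfl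
    have hfac : K ≤ (m + j).factorization p :=
      (Nat.Prime.pow_dvd_iff_le_factorization hp (by omega)).mp hdvd
    calc S.card ≤ K := hcard
      _ ≤ (m + j).factorization p := hfac
      _ ≤ (Finset.Icc 1 n).sup (fun i => (m + i).factorization p) :=
        Finset.le_sup (f := fun i => (m + i).factorization p) (Finset.mem_Icc.mpr ⟨hj1, hjn⟩)
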